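/- The vertex set of every cubic graph can be 2-colored so that every monochromatic connected component contains at most two vertices. -/
import Mathlib


open SimpleGraph

/-- A cubic graph: every vertex has degree 3. -/
def IsCubic {V : Type*} [Fintype V] (G : SimpleGraph V) : Prop :=
  ∀ v : V, Nat.card (G.neighborSet v) = 3

/-- A circular nowhere-zero `r`-flow: an orientation `dir` of `G` together with
a flow value `f` on each directed edge, with values in `[1, r-1]` and flow
conservation at every vertex. -/
structure CNZF {V : Type*} [Fintype V] (G : SimpleGraph V) (r : ℝ) where
  dir : V → V → Bool
  f : V → V → ℝ
  orients : ∀ u v, G.Adj u v ↔ (dir u v = true ∨ dir v u = true)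
  asymm : ∀ u v, dir u v = true → dir v u = false
  lb : ∀ u v, dir u v = true → 1 ≤ f u v
  ub : ∀ u v, dir u v = true → f u v ≤ r - 1
  conserv : ∀ v : V, (∑ u : V, if dir v u = true then f v u else 0)
      = ∑ u : V, if dir u v = true then f u v else 0

/-- Out-degree of a vertex in an orientation. -/
noncomputable def outDeg {V : Type*} (dir : V → V → Bool) (v : V) : ℕ :=
  Nat.card {u | dir v u = true}

/-- Every connected component of the subgraph induced by `S` is a tree
on at most `m` vertices. -/
def MonoOK {V : Type*} (G : SimpleGraph V) (m : ℕ) (S : Set V) : Prop :=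
  (G.induce S).IsAcyclic ∧
    ∀ c : (G.induce S).ConnectedComponent, Nat.card c.supp ≤ m

/-- A `k`-weak bisection, given by its first part `S`. -/
def IsWeakBisection {V : Type*} [Fintype V] (G : SimpleGraph V) (k : ℕ) (S : Set V) : Prop :=
  Nat.card S = Nat.card (Sᶜ : Set V) ∧ MonoOK G (k-2) S ∧ MonoOK G (k-2) (Sᶜ : Set V)

/-- Every monochromatic component of the 2-coloring `c` has at most `m` vertices. -/
def MonoAtMost {V : Type*} (G : SimpleGraph V) (c : V → Bool) (m : ℕ) : Prop :=
  ∀ b : Bool, ∀ comp : (G.induce {v | c v = b}).ConnectedComponent,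
    Nat.card comp.supp ≤ m

/-- Edges of `L_k` (on vertex labels `0, …, 5+2k`): `L_0` is `K_{3,3}` minus an
edge (parts `{0,1,4}` and `{2,3,5}`, edge `45` removed, degree-2 vertices `4,5`);
at step `j` the two new adjacent vertices `4+2j, 5+2j` are attached to the
previous degree-2 vertices `2+2j, 3+2j`. The degree-2 vertices of `L_k` are
`4+2k` and `5+2k`. -/
def LEdge (k : ℕ) (a b : ℕ) : Prop :=
  (a, b) ∈ ({(0,2),(0,3),(0,5),(1,2),(1,3),(1,5),(4,2),(4,3)} : Set (ℕ × ℕ)) ∨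
  ∃ j, 1 ≤ j ∧ j ≤ k ∧
    ((a, b) = (4+2*j, 5+2*j) ∨ (a, b) = (2+2*j, 4+2*j) ∨ (a, b) = (3+2*j, 5+2*j))

/-- The graph `L_k`. -/
def Lgraph (k : ℕ) : SimpleGraph (Fin (6+2*k)) :=
  SimpleGraph.fromRel (fun a b => LEdge k a.val b.val)

/-- Edges of `T_k`: one copy of `L'_k` (the copy of `L_k` on `0..5+2k` with apex
`6+2k`), two copies of `L'_0` (on `7+2k..12+2k` with apex `13+2k`, and on
`14+2k..19+2k` with apex `20+2k`), and a central vertex `21+2k` adjacent to the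
three apexes. -/
def TEdge (k : ℕ) (a b : ℕ) : Prop :=
  LEdge k a b
  ∨ (a = 6+2*k ∧ (b = 4+2*k ∨ b = 5+2*k))
  ∨ (∃ a' b', LEdge 0 a' b' ∧ a = 7+2*k+a' ∧ b = 7+2*k+b')
  ∨ (a = 13+2*k ∧ (b = 11+2*k ∨ b = 12+2*k))
  ∨ (∃ a' b', LEdge 0 a' b' ∧ a = 14+2*k+a' ∧ b = 14+2*k+b')
  ∨ (a = 20+2*k ∧ (b = 18+2*k ∨ b = 19+2*k))
  ∨ (a = 21+2*k ∧ (b = 6+2*k ∨ b = 13+2*k ∨ b = 20+2*k))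

/-- The cubic graph `T_k`. -/
def Tgraph (k : ℕ) : SimpleGraph (Fin (22+2*k)) :=
  SimpleGraph.fromRel (fun a b => TEdge k a.val b.val)

/-- A valid factor of `G`: a spanning subgraph all of whose components are paths
or cycles (equivalently, all degrees are 1 or 2), such that the two endpoints
(degree-1 vertices) of every odd component are non-adjacent in `G`; in particular
no component is an isolated vertex. -/
def IsValidFactor {V : Type*} (G H : SimpleGraph V) : Prop :=
  H ≤ G ∧
  (∀ v : V, 1 ≤ Nat.card (H.neighborSet v) ∧ Nat.card (H.neighborSet v) ≤ 2) ∧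
  ∀ c : H.ConnectedComponent, Odd (Nat.card c.supp) →
    ∀ u v : V, u ∈ c.supp → v ∈ c.supp → u ≠ v →
      Nat.card (H.neighborSet u) = 1 → Nat.card (H.neighborSet v) = 1 → ¬ G.Adj u v

/-- A component of `H` is a cycle iff all its vertices have degree 2 in `H`. -/
def IsCycleComp {V : Type*} (H : SimpleGraph V) (c : H.ConnectedComponent) : Prop :=
  ∀ v ∈ c.supp, Nat.card (H.neighborSet v) = 2

/-- An odd cycle component. -/
def OddCycleComp {V : Type*} (H : SimpleGraph V) (c : H.ConnectedComponent) : Prop :=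
  Odd (Nat.card c.supp) ∧ IsCycleComp H c

/-- An odd path component (a component with an odd number of vertices containing
a degree-1 vertex). -/
def OddPathComp {V : Type*} (H : SimpleGraph V) (c : H.ConnectedComponent) : Prop :=
  Odd (Nat.card c.supp) ∧ ∃ v ∈ c.supp, Nat.card (H.neighborSet v) = 1

noncomputable def numComponents {V : Type*} (H : SimpleGraph V) : ℕ := Nat.card H.ConnectedComponent

noncomputable def numOddCycles {V : Type*} (H : SimpleGraph V) : ℕ :=
  Nat.card {c : H.ConnectedComponent // OddCycleComp H c}

/-- `H` is a valid factor of `G` with the minimum number of components. -/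
def MinimizesComponents {V : Type*} (G H : SimpleGraph V) : Prop :=
  IsValidFactor G H ∧ ∀ H' : SimpleGraph V, IsValidFactor G H' →
    numComponents H ≤ numComponents H'

/-- `H` is a valid factor of `G` minimizing the number of components and,
subject to that, the number of odd cycles. -/
def IsMinValidFactor {V : Type*} (G H : SimpleGraph V) : Prop :=
  MinimizesComponents G H ∧
  ∀ H' : SimpleGraph V, IsValidFactor G H' →
    numComponents H' = numComponents H → numOddCycles H ≤ numOddCycles H'

/-- An external vertex of a factor: an endpoint of a path component, or a vertex
of an odd cycle component. -/
def ExternalVtx {V : Type*} (H : SimpleGraph V) (v : V) : Prop :=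
  Nat.card (H.neighborSet v) = 1 ∨ OddCycleComp H (H.connectedComponentMk v)

/-- In a graph where every vertex has at most one neighbor, reachability implies
equality or adjacency. -/
lemma degOne_reach {W : Type*} (H : SimpleGraph W)
    (hH : ∀ a u v : W, H.Adj a u → H.Adj a v → u = v)
    {u w : W} (h : H.Reachable u w) : u = w ∨ H.Adj u w := by
  obtain ⟨p⟩ := h
  induction p with
  | nil => exact Or.inl rfl
  | @cons u x w h' p ih =>
    rcases ih with rfl | hadj
    · exact Or.inr h'
    · exact Or.inl (hH x u w h'.symm hadj)

/-- Every cubic graph can be 2-colored so that every monochromatic component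
has at most two vertices. -/
theorem stmt7 {V : Type*} [Fintype V] (G : SimpleGraph V) (hG : IsCubic G) :
    ∃ c : V → Bool, MonoAtMost G c 2 := by
  classical
  -- number of same-colored neighbors of `x`
  let F : (V → Bool) → V → ℕ := fun c x =>
    ((G.neighborFinset x).filter (fun u => c u = c x)).card
  let bad : (V → Bool) → ℕ := fun c => ∑ x : V, F c x
  obtain ⟨c, hc⟩ := Finite.exists_min bad
  have deg3 : ∀ v : V, (G.neighborFinset v).card = 3 := by
    intro v
    have h := hG v
    rwa [Nat.card_eq_fintype_card, SimpleGraph.card_neighborSet_eq_degree] at h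
  -- key: each vertex has at most one same-colored neighbor
  have key : ∀ v : V, F c v ≤ 1 := by
    intro v
    by_contra hkey
    push_neg at hkey
    set c' : V → Bool := Function.update c v (!c v) with hc'def
    set s : ℕ := F c v with hsdef
    set d : ℕ := ((G.neighborFinset v).filter (fun u => ¬ c u = c v)).card with hddef
    have hsd : s + d = 3 := by
      rw [hsdef, hddef]
      show ((G.neighborFinset v).filter _).card + _ = _
      rw [Finset.card_filter_add_card_filter_not]
      exact deg3 v
    have hcv : c' v = !c v := Function.update_self v _ c
    have hco : ∀ u, u ≠ v → c' u = c u := fun u hu => Function.update_of_ne hu _ _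
    have hvNv : v ∉ G.neighborFinset v := G.notMem_neighborFinset_self v
    have hne_of_mem : ∀ u, u ∈ G.neighborFinset v → u ≠ v :=
      fun u hu h => hvNv (h ▸ hu)
    -- value at v
    have hv : F c' v = d := by
      show ((G.neighborFinset v).filter (fun u => c' u = c' v)).card = d
      rw [hddef]
      congr 1
      apply Finset.filter_congr
      intro u hu
      rw [hco u (hne_of_mem u hu), hcv, Bool.eq_not_iff]
    -- values at neighbors of v
    have hnbr : ∀ x ∈ G.neighborFinset v,
        F c' x + (if c x = c v then 1 else 0) = F c x + (if c x = c v then 0 else 1) := by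
      intro x hx
      have hxv : x ≠ v := hne_of_mem x hx
      have hvx : v ∈ G.neighborFinset x := by
        rw [SimpleGraph.mem_neighborFinset] at hx ⊢
        exact hx.symm
      have hFx : F c x = ((G.neighborFinset x).filter (fun u => c u = c x)).card := rfl
      have hFx' : F c' x = ((G.neighborFinset x).filter (fun u => c' u = c' x)).card := rfl
      by_cases h : c x = c v
      · have hvA : v ∈ (G.neighborFinset x).filter (fun u => c u = c x) := by
          simp [Finset.mem_filter, hvx, h.symm]
        have hnv : ¬ (c' v = c' x) := by
          rw [hcv, hco x hxv, h]
          cases c v <;> simp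
        have hA : (G.neighborFinset x).filter (fun u => c' u = c' x)
            = ((G.neighborFinset x).filter (fun u => c u = c x)).erase v := by
          ext u
          by_cases huv : u = v
          · subst huv
            simp [Finset.mem_filter, Finset.mem_erase, hnv]
          · simp [Finset.mem_filter, Finset.mem_erase, huv, hco u huv, hco x hxv]
        have hpos : 1 ≤ F c x := hFx ▸ Finset.card_pos.mpr ⟨v, hvA⟩
        rw [hFx', hFx, hA, Finset.card_erase_of_mem hvA, if_pos h, if_pos h, ← hFx]
        omega
      · have hvA : v ∉ (G.neighborFinset x).filter (fun u => c u = c x) := by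
          simp only [Finset.mem_filter, not_and]
          exact fun _ hcc => h hcc.symm
        have hyv : c' v = c' x := by
          rw [hcv, hco x hxv]
          cases hb : c v <;> cases hb2 : c x <;> simp_all
        have hA : (G.neighborFinset x).filter (fun u => c' u = c' x)
            = insert v ((G.neighborFinset x).filter (fun u => c u = c x)) := by
          ext u
          by_cases huv : u = v
          · subst huv
            simp [Finset.mem_filter, hvx, hyv]
          · simp [Finset.mem_filter, Finset.mem_insert, huv, hco u huv, hco x hxv]
        rw [hFx', hFx, hA, Finset.card_insert_of_notMem hvA, if_neg h, if_neg h]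
      -- values elsewhere
    have hrest : ∀ x, x ≠ v → x ∉ G.neighborFinset v → F c' x = F c x := by
      intro x hxv hxN
      have hvNx : v ∉ G.neighborFinset x := by
        intro hmem
        rw [SimpleGraph.mem_neighborFinset] at hmem
        exact hxN (by rw [SimpleGraph.mem_neighborFinset]; exact hmem.symm)
      show ((G.neighborFinset x).filter (fun u => c' u = c' x)).card = _
      congr 1
      apply Finset.filter_congr
      intro u hu
      have huv : u ≠ v := by rintro rfl; exact hvNx hu
      rw [hco u huv, hco x hxv]
    -- assemble
    set Nv := G.neighborFinset v with hNv
    set rest := Finset.univ \ insert v Nv with hrestdef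
    have hsplit : ∀ g : V → ℕ, ∑ x, g x = ∑ x ∈ rest, g x + (g v + ∑ x ∈ Nv, g x) := by
      intro g
      rw [hrestdef, ← Finset.sum_sdiff (Finset.subset_univ (insert v Nv)),
        Finset.sum_insert hvNv]
    have hsum1 : ∑ x ∈ Nv, F c' x + s = ∑ x ∈ Nv, F c x + d := by
      have h1 : ∑ x ∈ Nv, (F c' x + (if c x = c v then 1 else 0))
          = ∑ x ∈ Nv, (F c x + (if c x = c v then 0 else 1)) :=
        Finset.sum_congr rfl hnbr
      rw [Finset.sum_add_distrib, Finset.sum_add_distrib] at h1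
      have h2 : ∑ x ∈ Nv, (if c x = c v then 1 else 0) = s := by
        rw [hsdef]
        show _ = ((G.neighborFinset v).filter (fun u => c u = c v)).card
        rw [Finset.card_filter]
      have h3 : ∑ x ∈ Nv, (if c x = c v then 0 else 1) = d := by
        rw [hddef, Finset.card_filter]
        apply Finset.sum_congr rfl
        intro x _
        by_cases h : c x = c v <;> simp [h]
      omega
    have hrest' : ∑ x ∈ rest, F c' x = ∑ x ∈ rest, F c x := by
      apply Finset.sum_congr rfl
      intro x hx
      rw [hrestdef, Finset.mem_sdiff, Finset.mem_insert] at hx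
      push_neg at hx
      exact hrest x hx.2.1 hx.2.2
    have hineq : bad c ≤ bad c' := hc c'
    have e1 : bad c' = ∑ x ∈ rest, F c' x + (F c' v + ∑ x ∈ Nv, F c' x) := hsplit _
    have e2 : bad c = ∑ x ∈ rest, F c x + (F c v + ∑ x ∈ Nv, F c x) := hsplit _
    rw [e1, e2, hrest', hv] at hineq
    omega
  -- conclude
  refine ⟨c, ?_⟩
  intro b comp
  have hadjuniq : ∀ a u v : ↥({v | c v = b} : Set V),
      (G.induce {v | c v = b}).Adj a u → (G.induce {v | c v = b}).Adj a v → u = v := by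
    intro a u v h1 h2
    have g1 : G.Adj a.val u.val := h1
    have g2 : G.Adj a.val v.val := h2
    have hca : c a.val = b := a.2
    have hm1 : u.val ∈ (G.neighborFinset a.val).filter (fun w => c w = c a.val) := by
      rw [Finset.mem_filter, SimpleGraph.mem_neighborFinset]
      exact ⟨g1, by rw [hca]; exact u.2⟩
    have hm2 : v.val ∈ (G.neighborFinset a.val).filter (fun w => c w = c a.val) := by
      rw [Finset.mem_filter, SimpleGraph.mem_neighborFinset]
      exact ⟨g2, by rw [hca]; exact v.2⟩
    exact Subtype.ext (Finset.card_le_one.mp (key a.val) _ hm1 _ hm2)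
  obtain ⟨w, hw⟩ := comp.exists_rep
  have hw' : (G.induce {v | c v = b}).connectedComponentMk w = comp := hw
  have hsub : comp.supp ⊆ {w} ∪ (G.induce {v | c v = b}).neighborSet w := by
    intro u hu
    rw [SimpleGraph.ConnectedComponent.mem_supp_iff] at hu
    have hr : (G.induce {v | c v = b}).Reachable u w :=
      SimpleGraph.ConnectedComponent.exact (hu.trans hw'.symm)
    rcases degOne_reach _ hadjuniq hr with rfl | hadj
    · exact Or.inl rfl
    · exact Or.inr hadj.symm
  calc Nat.card comp.supp = comp.supp.ncard := Nat.card_coe_set_eq _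
    _ ≤ ({w} ∪ (G.induce {v | c v = b}).neighborSet w).ncard :=
        Set.ncard_le_ncard hsub (Set.toFinite _)
    _ ≤ ({w} : Set _).ncard + ((G.induce {v | c v = b}).neighborSet w).ncard :=
        Set.ncard_union_le _ _
    _ ≤ 1 + 1 := by
        gcongr
        · exact le_of_eq (Set.ncard_singleton w)
        · rw [Set.ncard_le_one (Set.toFinite _)]
          intro x hx y hy
          exact hadjuniq w x y hx hy
    _ = 2 := rfl
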